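/- Let (Ω, μ) be a finite measure space, let φ : ℝ → ℝ be continuous and nonnegative, and let v : Ω → ℝ be measurable such that ∫_Ω φ(v(x))²·v(x)² dμ(x) ≤ F² for some constant F ≥ 0. Then φ ∘ v belongs to L²(μ) and ∫_Ω φ(v(x))² dμ(x) ≤ F² + γ·μ(Ω), where γ := sup{φ(s)² : s ∈ [−1,1]} (which is finite by continuity of φ). -/

import Mathlib

open MeasureTheory

/-- If `φ` is continuous and nonnegative and `∫ φ(v)² v² ≤ F²` on a finite
measure space, then `φ ∘ v ∈ L²` with
`∫ φ(v)² ≤ F² + γ · μ(Ω)`, where `γ = sup {φ(s)² : s ∈ [-1,1]}`. -/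
theorem stmt_3 {Ω : Type*} [MeasurableSpace Ω] (μ : Measure Ω) [IsFiniteMeasure μ]
    (φ : ℝ → ℝ) (hφc : Continuous φ) (hφ : ∀ s, 0 ≤ φ s)
    (v : Ω → ℝ) (hv : Measurable v)
    (F : ℝ) (hF : 0 ≤ F)
    (hint : Integrable (fun x => (φ (v x)) ^ 2 * (v x) ^ 2) μ)
    (hbound : ∫ x, (φ (v x)) ^ 2 * (v x) ^ 2 ∂μ ≤ F ^ 2) :
    MemLp (fun x => φ (v x)) 2 μ ∧
      ∫ x, (φ (v x)) ^ 2 ∂μ ≤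
        F ^ 2 + sSup ((fun s => (φ s) ^ 2) '' Set.Icc (-1 : ℝ) 1) *
          (μ Set.univ).toReal := by
  set γ := sSup ((fun s => (φ s) ^ 2) '' Set.Icc (-1 : ℝ) 1) with hγ
  have hbdd : BddAbove ((fun s => (φ s) ^ 2) '' Set.Icc (-1 : ℝ) 1) :=
    (isCompact_Icc.image (by continuity)).bddAbove
  have hγle : ∀ s ∈ Set.Icc (-1 : ℝ) 1, (φ s) ^ 2 ≤ γ := fun s hs =>
    le_csSup hbdd ⟨s, hs, rfl⟩
  have hγ0 : 0 ≤ γ := le_trans (sq_nonneg (φ 0)) (hγle 0 (by norm_num))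
  -- pointwise bound
  have hpt : ∀ x, (φ (v x)) ^ 2 ≤ (φ (v x)) ^ 2 * (v x) ^ 2 + γ := by
    intro x
    by_cases h : |v x| ≤ 1
    · have : (φ (v x)) ^ 2 ≤ γ := hγle _ (abs_le.mp h)
      nlinarith [mul_nonneg (sq_nonneg (φ (v x))) (sq_nonneg (v x))]
    · have h1 : 1 ≤ (v x) ^ 2 := by
        have := le_of_not_ge h
        nlinarith [abs_nonneg (v x), sq_abs (v x)]
      nlinarith [sq_nonneg (φ (v x))]
  have hmeas : AEStronglyMeasurable (fun x => φ (v x)) μ :=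
    (hφc.measurable.comp hv).aestronglyMeasurable
  have hintg : Integrable (fun x => (φ (v x)) ^ 2 * (v x) ^ 2 + γ) μ :=
    hint.add (integrable_const γ)
  have hint2 : Integrable (fun x => (φ (v x)) ^ 2) μ := by
    refine hintg.mono' ((hmeas.pow 2)) ?_
    filter_upwards with x
    rw [Real.norm_eq_abs, abs_of_nonneg (sq_nonneg _)]
    exact hpt x
  constructor
  · exact (memLp_two_iff_integrable_sq hmeas).mpr hint2
  · calc ∫ x, (φ (v x)) ^ 2 ∂μ ≤ ∫ x, ((φ (v x)) ^ 2 * (v x) ^ 2 + γ) ∂μ :=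
          integral_mono hint2 hintg hpt
      _ = (∫ x, (φ (v x)) ^ 2 * (v x) ^ 2 ∂μ) + γ * (μ Set.univ).toReal := by
          rw [integral_add hint (integrable_const γ), integral_const, smul_eq_mul,
            mul_comm]
          rfl
      _ ≤ F ^ 2 + γ * (μ Set.univ).toReal := by linarith
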